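/- Let K be a field, R = K[x1,…,x5], and let I be the ideal of R generated by the monomials x1x3, x1x4, x2x4, x2x5, x3x5. Then the arithmetical rank of I equals 3; that is, there exist 3 elements of R generating an ideal whose radical equals the radical of I, and no fewer than 3 elements of R have this property. -/

import Mathlib

open MvPolynomial Polynomial

noncomputable section

namespace AraPentagon


variable (K : Type*) [Field K]

noncomputable abbrev e1 : MvPolynomial (Fin 5) K := X 0 * X 2
noncomputable abbrev e2 : MvPolynomial (Fin 5) K := X 0 * X 3
noncomputable abbrev e3 : MvPolynomial (Fin 5) K := X 1 * X 3
noncomputable abbrev e4 : MvPolynomial (Fin 5) K := X 1 * X 4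
noncomputable abbrev e5 : MvPolynomial (Fin 5) K := X 2 * X 4

noncomputable def I5 : Ideal (MvPolynomial (Fin 5) K) :=
  Ideal.span {e1 K, e2 K, e3 K, e4 K, e5 K}

theorem upper : ∃ f : Fin 3 → MvPolynomial (Fin 5) K,
    (Ideal.span (Set.range f)).radical = (I5 K).radical := by
  set g1 : MvPolynomial (Fin 5) K := X 0 * X 2 with hg1
  set g2 : MvPolynomial (Fin 5) K := X 0 * X 3 + X 1 * X 4 with hg2
  set g3 : MvPolynomial (Fin 5) K := X 1 * X 3 + X 2 * X 4 with hg3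
  refine ⟨![g1, g2, g3], ?_⟩
  have hrange : Set.range ![g1, g2, g3] = {g1, g2, g3} := by
    ext x
    constructor
    · rintro ⟨i, rfl⟩
      fin_cases i <;> simp
    · rintro (rfl | rfl | rfl)
      exacts [⟨0, rfl⟩, ⟨1, rfl⟩, ⟨2, rfl⟩]
  rw [hrange]
  set J := Ideal.span ({g1, g2, g3} : Set (MvPolynomial (Fin 5) K)) with hJ
  have hg1J : g1 ∈ J := Ideal.subset_span (by simp)
  have hg2J : g2 ∈ J := Ideal.subset_span (by simp)
  have hg3J : g3 ∈ J := Ideal.subset_span (by simp)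
  have hm1 : e1 K ∈ I5 K := Ideal.subset_span (by simp)
  have hm2 : e2 K ∈ I5 K := Ideal.subset_span (by simp [e1, e2])
  have hm3 : e3 K ∈ I5 K := Ideal.subset_span (by simp [e1, e2, e3])
  have hm4 : e4 K ∈ I5 K := Ideal.subset_span (by simp [e1, e2, e3, e4])
  have hm5 : e5 K ∈ I5 K := Ideal.subset_span (by simp [e1, e2, e3, e4, e5])
  apply le_antisymm
  · -- rad J ≤ rad I5
    have hJI : J ≤ (I5 K).radical := by
      rw [hJ, Ideal.span_le]
      rintro x (rfl | rfl | rfl)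
      · exact Ideal.le_radical hm1
      · exact Ideal.le_radical ((I5 K).add_mem hm2 hm4)
      · exact Ideal.le_radical ((I5 K).add_mem hm3 hm5)
    calc J.radical ≤ (I5 K).radical.radical := Ideal.radical_mono hJI
      _ = (I5 K).radical := Ideal.radical_idem _
  · -- rad I5 ≤ rad J
    have h2 : e2 K ∈ J.radical := by
      refine ⟨2, ?_⟩
      have : (e2 K) ^ 2 =
          (X 0 * X 3) * g2 + (-(X 0 * X 4)) * g3 + (X 4 ^ 2) * g1 := by
        rw [hg1, hg2, hg3]; ring
      rw [this]
      exact J.add_mem (J.add_mem (J.mul_mem_left _ hg2J) (J.mul_mem_left _ hg3J))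
        (J.mul_mem_left _ hg1J)
    have h3 : e3 K ∈ J.radical := by
      refine ⟨2, ?_⟩
      have : (e3 K) ^ 2 =
          (X 1 * X 3) * g3 + (-(X 2 * X 3)) * g2 + (X 3 ^ 2) * g1 := by
        rw [hg1, hg2, hg3]; ring
      rw [this]
      exact J.add_mem (J.add_mem (J.mul_mem_left _ hg3J) (J.mul_mem_left _ hg2J))
        (J.mul_mem_left _ hg1J)
    have hIJ : I5 K ≤ J.radical := by
      rw [I5, Ideal.span_le]
      rintro x (rfl | rfl | rfl | rfl | rfl)
      · exact Ideal.le_radical hg1J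
      · exact h2
      · exact h3
      · have : e4 K = g2 - e2 K := by rw [hg2]; ring
        rw [this]
        exact J.radical.sub_mem (Ideal.le_radical hg2J) h2
      · have : e5 K = g3 - e3 K := by rw [hg3]; ring
        rw [this]
        exact J.radical.sub_mem (Ideal.le_radical hg3J) h3
    calc (I5 K).radical ≤ J.radical.radical := Ideal.radical_mono hIJ
      _ = J.radical := Ideal.radical_idem _


variable {L : Type*} [Field L]

local notation "A2" => MvPolynomial (Fin 2) L
local notation "P3" => MvPolynomial (Fin 3) L







lemma prime_X0 : Prime (X 0 : A2) := by
  have e := MvPolynomial.finSuccEquiv L 1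
  have h : Prime (Polynomial.X : Polynomial (MvPolynomial (Fin 1) L)) := Polynomial.prime_X
  have : (MvPolynomial.finSuccEquiv L 1) (X 0) = Polynomial.X := finSuccEquiv_X_zero
  rw [← MulEquiv.prime_iff (MvPolynomial.finSuccEquiv L 1).toMulEquiv]
  simpa [this]

lemma prime_X1 : Prime (X 1 : A2) := by
  have h : (renameEquiv L (Equiv.swap (0 : Fin 2) 1)) (X 0) = X 1 := by
    simp [renameEquiv_apply, rename_X]
  rw [← MulEquiv.prime_iff (renameEquiv L (Equiv.swap (0 : Fin 2) 1)).toMulEquiv]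
  have h2 : ((renameEquiv L (Equiv.swap (0 : Fin 2) 1)).toMulEquiv (X 1 : A2)) = X 0 := by
    simp [renameEquiv_apply]
  rw [h2]; exact prime_X0

lemma X0_not_dvd_X1 : ¬ (X 0 : A2) ∣ X 1 := by
  rintro ⟨q, hq⟩
  have := congrArg (MvPolynomial.eval (fun i : Fin 2 => if i = 0 then (0 : L) else 1)) hq
  simp at this

lemma span_pair_unit_mul {R : Type*} [CommRing R] {u F G : R} (hu : IsUnit u) :
    Ideal.span {u * F, G} = Ideal.span ({F, G} : Set R) := by
  obtain ⟨w, hw⟩ := hu.exists_left_inv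
  apply le_antisymm <;> rw [Ideal.span_le] <;> rintro x (rfl | rfl)
  · exact Ideal.mem_span_pair.mpr ⟨u, 0, by ring⟩
  · exact Ideal.mem_span_pair.mpr ⟨0, 1, by ring⟩
  · exact Ideal.mem_span_pair.mpr ⟨w, 0, by rw [zero_mul, add_zero, ← mul_assoc, hw, one_mul]⟩
  · exact Ideal.mem_span_pair.mpr ⟨0, 1, by ring⟩





noncomputable def Xi2 (M₁ M₂ : ℕ) : P3 →+* Polynomial A2 :=
  eval₂Hom ((Polynomial.C : A2 →+* Polynomial A2).comp (MvPolynomial.C : L →+* A2))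
    ![Polynomial.X, Polynomial.C (X 0) + Polynomial.X ^ M₁,
      Polynomial.C (X 1) + Polynomial.X ^ M₂]

noncomputable def rho3 : P3 →+* L := eval₂Hom (RingHom.id L) (fun _ => 0)

lemma digits_lemma {M a b c a' b' c' : ℕ} (ha : a < M) (ha' : a' < M)
    (hb : b < M) (hb' : b' < M)
    (h : a + b * M + c * (M * M) = a' + b' * M + c' * (M * M)) :
    a = a' ∧ b = b' ∧ c = c' := by
  have hM : 0 < M := by omega
  have key : ∀ x y z : ℕ, x < M → (x + y * M + z * (M * M)) % M = x := by
    intro x y z hx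
    have e : x + y * M + z * (M * M) = x + M * (y + z * M) := by ring
    rw [e, Nat.add_mul_mod_self_left, Nat.mod_eq_of_lt hx]
  have h1 : a = a' := by
    have := congrArg (· % M) h
    simpa [key _ _ _ ha, key _ _ _ ha'] using this
  subst h1
  have h2 : b + c * M = b' + c' * M := by
    have h' : M * (b + c * M) = M * (b' + c' * M) := by
      have hre : a + (b * M + c * (M * M)) = a + (b' * M + c' * (M * M)) := by
        rw [← add_assoc, ← add_assoc]; exact h
      have hcan := Nat.add_left_cancel hre
      calc M * (b + c * M) = b * M + c * (M * M) := by ring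
        _ = b' * M + c' * (M * M) := hcan
        _ = M * (b' + c' * M) := by ring
    exact Nat.eq_of_mul_eq_mul_left hM h'
  have h3 : b = b' := by
    have := congrArg (· % M) h2
    simpa [Nat.add_mul_mod_self_right, Nat.mod_eq_of_lt hb, Nat.mod_eq_of_lt hb'] using this
  subst h3
  have h4 : c * M = c' * M := Nat.add_left_cancel h2
  exact ⟨rfl, rfl, Nat.eq_of_mul_eq_mul_right hM h4⟩

lemma monicize (F' : P3) (hF0 : F' ≠ 0) (hρ : rho3 F' = 0) :
    ∃ (M₁ M₂ : ℕ) (μ : L), 1 ≤ M₁ ∧ 1 ≤ M₂ ∧ μ ≠ 0 ∧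
      (Polynomial.C (MvPolynomial.C μ) * (Xi2 (L := L) M₁ M₂ F')).Monic ∧
      1 ≤ (Polynomial.C (MvPolynomial.C μ) * (Xi2 (L := L) M₁ M₂ F')).natDegree := by
  classical
  set D := F'.totalDegree with hD
  set M : ℕ := D + 1 with hM
  have hM1 : 1 ≤ M := by omega
  set d : (Fin 3 →₀ ℕ) → ℕ := fun m => m 0 + m 1 * M + m 2 * (M * M) with hd
  set S := F'.support with hSdef
  have hS : S.Nonempty := support_nonempty.mpr hF0
  have hsum : ∀ m : Fin 3 →₀ ℕ, (m.sum fun _ e => e) = m 0 + m 1 + m 2 := by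
    intro m
    rw [Finsupp.sum_fintype]
    · exact Fin.sum_univ_three m
    · intro _; rfl
  have hbound : ∀ m ∈ S, ∀ i, m i ≤ D := by
    intro m hm i
    have h1 : m i ≤ m.sum fun _ e => e := by
      by_cases hi : i ∈ m.support
      · exact Finset.single_le_sum (f := fun j => m j) (fun _ _ => Nat.zero_le _) hi
      · simp [Finsupp.notMem_support_iff.mp hi]
    exact h1.trans (le_totalDegree hm)
  -- the three monic building blocks
  set w1 : Polynomial A2 := Polynomial.C (X 0) + Polynomial.X ^ M with hw1
  set w2 : Polynomial A2 := Polynomial.C (X 1) + Polynomial.X ^ (M * M) with hw2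
  have hw1m : w1.Monic := by
    rw [hw1, add_comm]
    refine monic_X_pow_add ?_
    refine lt_of_le_of_lt (degree_C_le) ?_
    exact_mod_cast Nat.cast_pos.mpr (by omega : 0 < M)
  have hw2m : w2.Monic := by
    rw [hw2, add_comm]
    refine monic_X_pow_add ?_
    refine lt_of_le_of_lt (degree_C_le) ?_
    exact_mod_cast Nat.cast_pos.mpr (by positivity : 0 < M * M)
  have hw1d : w1.natDegree = M := by rw [hw1, add_comm]; exact natDegree_X_pow_add_C
  have hw2d : w2.natDegree = M * M := by rw [hw2, add_comm]; exact natDegree_X_pow_add_C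
  set Pm : (Fin 3 →₀ ℕ) → Polynomial A2 :=
    fun m => Polynomial.X ^ m 0 * w1 ^ m 1 * w2 ^ m 2 with hPm
  have hPmonic : ∀ m, (Pm m).Monic := fun m =>
    ((monic_X_pow _).mul (hw1m.pow _)).mul (hw2m.pow _)
  have hPdeg : ∀ m, (Pm m).natDegree = d m := by
    intro m
    rw [hPm]
    rw [Monic.natDegree_mul ((monic_X_pow _).mul (hw1m.pow _)) (hw2m.pow _)]
    rw [Monic.natDegree_mul (monic_X_pow _) (hw1m.pow _)]
    rw [hw1m.natDegree_pow, hw2m.natDegree_pow]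
    rw [natDegree_X_pow, hw1d, hw2d]
  -- image of a monomial
  have hmono : ∀ (m : Fin 3 →₀ ℕ) (a : L),
      Xi2 (L := L) M (M * M) (monomial m a) = Polynomial.C (MvPolynomial.C a) * Pm m := by
    intro m a
    unfold Xi2
    rw [eval₂Hom_monomial]
    congr 1
    rw [Finsupp.prod_fintype _ _ (fun i => pow_zero _), Fin.prod_univ_three]
    rw [hPm, hw1, hw2]
    norm_num [Matrix.cons_val_two]
  -- maximizer
  obtain ⟨mstar, hmstarS, hdstar⟩ := Finset.exists_mem_eq_sup S hS d
  set dstar := S.sup d with hdstardef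
  have hstrict : ∀ m ∈ S, m ≠ mstar → d m < dstar := by
    intro m hm hne
    have hle : d m ≤ dstar := Finset.le_sup hm
    rcases lt_or_eq_of_le hle with h | h
    · exact h
    · exfalso
      apply hne
      have heq : d m = d mstar := by rw [h, hdstar]
      have hb1 : m 0 < M := by have := hbound m hm 0; omega
      have hb2 : m 1 < M := by have := hbound m hm 1; omega
      have hb1' : mstar 0 < M := by have := hbound mstar hmstarS 0; omega
      have hb2' : mstar 1 < M := by have := hbound mstar hmstarS 1; omega
      obtain ⟨q0, q1, q2⟩ := digits_lemma hb1 hb1' hb2 hb2' heq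
      ext i
      fin_cases i
      · exact q0
      · exact q1
      · exact q2
  set E := Xi2 (L := L) M (M * M) F' with hE
  have hEsum : E = ∑ m ∈ S, Polynomial.C (MvPolynomial.C (coeff m F')) * Pm m := by
    rw [hE]
    conv_lhs => rw [as_sum F']
    rw [map_sum]
    exact Finset.sum_congr rfl fun m hm => hmono m _
  have hcoeffE : E.coeff dstar = MvPolynomial.C (coeff mstar F') := by
    rw [hEsum, finset_sum_coeff]
    rw [Finset.sum_eq_single_of_mem mstar hmstarS]
    · rw [Polynomial.coeff_C_mul]
      have h1 : (Pm mstar).coeff dstar = 1 := by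
        have hh : dstar = (Pm mstar).natDegree := by rw [hPdeg]; exact hdstar
        rw [hh]
        exact (hPmonic mstar).coeff_natDegree
      rw [h1, mul_one]
    · intro m hm hne
      rw [Polynomial.coeff_C_mul]
      have h0 : (Pm m).coeff dstar = 0 := by
        apply coeff_eq_zero_of_natDegree_lt
        rw [hPdeg]
        exact hstrict m hm hne
      rw [h0, mul_zero]
  have hdegE : E.degree ≤ (dstar : WithBot ℕ) := by
    rw [hEsum]
    refine (degree_sum_le _ _).trans ?_
    refine Finset.sup_le fun m hm => ?_
    calc (Polynomial.C (MvPolynomial.C (coeff m F')) * Pm m).degree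
        ≤ (Polynomial.C (MvPolynomial.C (coeff m F'))).degree + (Pm m).degree :=
          degree_mul_le _ _
      _ ≤ 0 + (d m : WithBot ℕ) := by
          apply add_le_add degree_C_le
          refine (degree_le_natDegree).trans ?_
          rw [hPdeg]
      _ = (d m : WithBot ℕ) := by rw [zero_add]
      _ ≤ (dstar : WithBot ℕ) := by exact_mod_cast Finset.le_sup hm
  have hnatE : E.natDegree ≤ dstar := natDegree_le_iff_degree_le.mpr hdegE
  set astar := coeff mstar F' with hastardef
  have hastar : astar ≠ 0 := mem_support_iff.mp hmstarS
  refine ⟨M, M * M, astar⁻¹, hM1, by nlinarith, inv_ne_zero hastar, ?_, ?_⟩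
  · apply monic_of_natDegree_le_of_coeff_eq_one dstar
    · rw [← hE]
      refine (natDegree_mul_le).trans ?_
      rw [natDegree_C, zero_add]
      exact hnatE
    · rw [← hE, Polynomial.coeff_C_mul, hcoeffE, ← MvPolynomial.C_mul, inv_mul_cancel₀ hastar,
        MvPolynomial.C_1]
  · -- 1 ≤ natDegree
    rw [← hE]
    have hc1 : (Polynomial.C (MvPolynomial.C astar⁻¹) * E).coeff dstar = 1 := by
      rw [Polynomial.coeff_C_mul, hcoeffE, ← MvPolynomial.C_mul, inv_mul_cancel₀ hastar,
        MvPolynomial.C_1]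
    have hds : dstar ≤ (Polynomial.C (MvPolynomial.C astar⁻¹) * E).natDegree :=
      le_natDegree_of_ne_zero (by rw [hc1]; exact one_ne_zero)
    -- 1 ≤ dstar
    have hD1 : 1 ≤ D := by
      by_contra hcon
      push_neg at hcon
      have hD0 : F'.totalDegree = 0 := by omega
      have hall := (totalDegree_eq_zero_iff (Fin 3) F').mp hD0
      have hFC : F' = MvPolynomial.C (constantCoeff F') := by
        apply MvPolynomial.ext
        intro m
        by_cases hm : m = 0
        · subst hm
          simp [MvPolynomial.coeff_C, MvPolynomial.constantCoeff_eq]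
        · have hms : m ∉ F'.support := by
            intro hmem
            apply hm
            ext i
            exact hall m hmem i
          rw [MvPolynomial.notMem_support_iff.mp hms, MvPolynomial.coeff_C,
            if_neg (Ne.symm hm)]
      have hcc : constantCoeff F' = 0 := by
        have : rho3 (L := L) F' = constantCoeff F' := by
          conv_lhs => rw [hFC]
          rw [rho3]
          simp
        rw [← this, hρ]
      rw [hcc, MvPolynomial.C_0] at hFC
      exact hF0 hFC
    have hd1 : 1 ≤ dstar := by
      obtain ⟨m₀, hm₀S, hDeq⟩ :=
        Finset.exists_mem_eq_sup S hS (fun m : Fin 3 →₀ ℕ => m.sum fun _ e => e)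
      have hDval : D = m₀ 0 + m₀ 1 + m₀ 2 := by
        rw [hD]
        rw [show F'.totalDegree = S.sup (fun m : Fin 3 →₀ ℕ => m.sum fun _ e => e) from rfl]
        rw [hDeq, hsum]
      have hDle : D ≤ d m₀ := by
        have hdm0 : d m₀ = m₀ 0 + m₀ 1 * M + m₀ 2 * (M * M) := rfl
        rw [hDval, hdm0]
        have h1 : m₀ 1 ≤ m₀ 1 * M := Nat.le_mul_of_pos_right _ (by omega)
        have h2 : m₀ 2 ≤ m₀ 2 * (M * M) := Nat.le_mul_of_pos_right _ (by positivity)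
        omega
      have hsup : d m₀ ≤ dstar := Finset.le_sup (f := d) hm₀S
      omega
    omega




/-- evaluation of `A2` at the origin -/
noncomputable def epsA : A2 →+* L := eval₂Hom (RingHom.id L) (fun _ => 0)

/-- evaluation of `A2[t]` at the origin (all variables and `t` to `0`) -/
noncomputable def rhoA : Polynomial A2 →+* L :=
  (epsA (L := L)).comp (Polynomial.evalRingHom 0)

set_option maxHeartbeats 2000000 in
set_option synthInstance.maxHeartbeats 400000 in
theorem core (Fm G w1 w2 u1 u2 : Polynomial A2)
    (hmon : Fm.Monic) (hd : 1 ≤ Fm.natDegree)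
    (hρF : rhoA Fm = 0) (hρG : rhoA G = 0)
    (hw1 : w1 = Polynomial.C (X 0) + Polynomial.X * u1)
    (hw2 : w2 = Polynomial.C (X 1) + Polynomial.X * u2)
    {a b c : ℕ}
    (ha : (Polynomial.X : Polynomial A2) ^ a ∈ Ideal.span {Fm, G})
    (hb : w1 ^ b ∈ Ideal.span {Fm, G})
    (hc : w2 ^ c ∈ Ideal.span {Fm, G}) : False := by
  classical
  set Dn := Fm.natDegree with hDn
  haveI : NeZero Dn := ⟨by omega⟩
  set J : Ideal (Polynomial A2) := Ideal.span {Fm, G} with hJ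
  -- the multiplication-by-G matrix in A2[t]/(Fm)
  set Mm : Matrix (Fin Dn) (Fin Dn) A2 :=
    fun i j => ((G * Polynomial.X ^ (j : ℕ)) %ₘ Fm).coeff (i : ℕ) with hMm
  set R : A2 := Mm.det with hR
  -- Step 1 : C R ∈ J
  have hmodJ : ∀ j : ℕ, (G * Polynomial.X ^ j) %ₘ Fm ∈ J := by
    intro j
    rw [modByMonic_eq_sub_mul_div _ Fm]
    refine Ideal.sub_mem _ ?_ ?_
    · exact Ideal.mul_mem_right _ _ (Ideal.subset_span (Set.mem_insert_of_mem _ rfl))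
    · exact Ideal.mul_mem_right _ _ (Ideal.subset_span (Set.mem_insert _ _))
  have hmoddeg : ∀ j : Fin Dn, ((G * Polynomial.X ^ (j : ℕ)) %ₘ Fm).degree < (Dn : WithBot ℕ) := by
    intro j
    have := degree_modByMonic_lt (G * Polynomial.X ^ (j : ℕ)) hmon
    refine this.trans_le ?_
    rw [degree_eq_natDegree hmon.ne_zero]
  have hCR : Polynomial.C R ∈ J := by
    have hexp : Polynomial.C R =
        ∑ j : Fin Dn, Polynomial.C ((Mm.adjugate) j 0) * ((G * Polynomial.X ^ (j : ℕ)) %ₘ Fm) := by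
      apply Polynomial.ext
      intro m
      rw [finset_sum_coeff]
      by_cases hm : m < Dn
      · have hsum : ∀ j : Fin Dn,
            (Polynomial.C ((Mm.adjugate) j 0) * ((G * Polynomial.X ^ (j : ℕ)) %ₘ Fm)).coeff m
            = Mm ⟨m, hm⟩ j * (Mm.adjugate) j 0 := by
          intro j
          rw [Polynomial.coeff_C_mul, hMm, mul_comm]
        rw [Finset.sum_congr rfl fun j _ => hsum j]
        have : ∑ j : Fin Dn, Mm ⟨m, hm⟩ j * (Mm.adjugate) j 0 = (Mm * Mm.adjugate) ⟨m, hm⟩ 0 :=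
          (Matrix.mul_apply).symm
        rw [this, Matrix.mul_adjugate, Matrix.smul_apply, Matrix.one_apply, Polynomial.coeff_C]
        by_cases h0 : m = 0
        · subst h0
          rw [if_pos rfl, if_pos (by ext; simp), smul_eq_mul, mul_one]
        · rw [if_neg h0, if_neg (by intro hcon; apply h0; simpa [Fin.ext_iff] using hcon),
            smul_eq_mul, mul_zero]
      · push_neg at hm
        have h1 : (Polynomial.C R).coeff m = 0 := by
          rw [Polynomial.coeff_C, if_neg (by omega)]
        rw [h1]
        symm
        apply Finset.sum_eq_zero
        intro j _
        rw [Polynomial.coeff_C_mul]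
        have : ((G * Polynomial.X ^ (j : ℕ)) %ₘ Fm).coeff m = 0 := by
          apply Polynomial.coeff_eq_zero_of_degree_lt
          exact (hmoddeg j).trans_le (by exact_mod_cast hm)
        rw [this, mul_zero]
    rw [hexp]
    exact Ideal.sum_mem _ fun j _ => Ideal.mul_mem_left _ _ (hmodJ j)
  -- Step 2 : eps R = 0
  have hrhoCR : rhoA (Polynomial.C R) = epsA R := by
    have h1 : (Polynomial.evalRingHom (0 : A2)) (Polynomial.C R) = R := by simp
    rw [rhoA, RingHom.comp_apply, h1]
  have hepsR : epsA (L := L) R = 0 := by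
    obtain ⟨p, q, hpq⟩ := Ideal.mem_span_pair.mp hCR
    rw [← hrhoCR, ← hpq, map_add, map_mul, map_mul, hρF, hρG, mul_zero, mul_zero, add_zero]
  -- Step 3 : a prime dividing R
  obtain ⟨p, hp, hpR⟩ : ∃ p : A2, Prime p ∧ p ∣ R := by
    by_cases hR0 : R = 0
    · exact ⟨X 0, prime_X0, by rw [hR0]; exact dvd_zero _⟩
    · have hnu : ¬IsUnit R := by
        intro hu
        have := hu.map (epsA (L := L))
        rw [hepsR] at this
        exact (not_isUnit_zero : ¬IsUnit (0 : L)) this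
      obtain ⟨q, hqirr, hqdvd⟩ := WfDvdMonoid.exists_irreducible_factor hnu hR0
      exact ⟨q, UniqueFactorizationMonoid.irreducible_iff_prime.mp hqirr, hqdvd⟩
  -- Step 4 : quotient domain and fraction field
  have hpI : (Ideal.span {p} : Ideal A2).IsPrime :=
    (Ideal.span_singleton_prime hp.ne_zero).mpr hp
  haveI := hpI
  set πp : A2 →+* FractionRing (A2 ⧸ (Ideal.span {p} : Ideal A2)) :=
    (algebraMap (A2 ⧸ (Ideal.span {p} : Ideal A2)) _).comp (Ideal.Quotient.mk _) with hπp
  have hπinj : Function.Injective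
      (algebraMap (A2 ⧸ (Ideal.span {p} : Ideal A2))
        (FractionRing (A2 ⧸ (Ideal.span {p} : Ideal A2)))) :=
    IsFractionRing.injective _ _
  have hπR : πp R = 0 := by
    have h1 : Ideal.Quotient.mk (Ideal.span {p}) R = 0 :=
      Ideal.Quotient.eq_zero_iff_mem.mpr (Ideal.mem_span_singleton.mpr hpR)
    rw [hπp, RingHom.comp_apply, h1, map_zero]
  -- Step 5 : reduced data
  set Fmκ := Fm.map πp with hFmκ
  set Gκ := G.map πp with hGκ
  have hFmκmon : Fmκ.Monic := hmon.map πp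
  have hFmκdeg : Fmκ.natDegree = Dn := hmon.natDegree_map πp
  set Mκ : Matrix (Fin Dn) (Fin Dn) _ :=
    fun i j => ((Gκ * Polynomial.X ^ (j : ℕ)) %ₘ Fmκ).coeff (i : ℕ) with hMκdef
  have hMκ : Mκ = πp.mapMatrix Mm := by
    funext i j
    show ((Gκ * Polynomial.X ^ (j : ℕ)) %ₘ Fmκ).coeff (i : ℕ) = πp (Mm i j)
    rw [hMm]
    rw [← Polynomial.coeff_map]
    congr 1
    rw [Polynomial.map_modByMonic _ hmon, Polynomial.map_mul, Polynomial.map_pow,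
      Polynomial.map_X]
  have hdetMκ : Mκ.det = 0 := by
    rw [hMκ, ← RingHom.map_det, ← hR, hπR]
  -- Step 6 : kernel vector
  obtain ⟨v, hv0, hvker⟩ := Matrix.exists_mulVec_eq_zero_iff.mpr hdetMκ
  -- Step 7 : the corresponding polynomial
  set vp := ∑ j : Fin Dn, Polynomial.C (v j) * Polynomial.X ^ (j : ℕ) with hvpdef
  have hvpcoeff : ∀ j : Fin Dn, vp.coeff (j : ℕ) = v j := by
    intro j
    rw [hvpdef, finset_sum_coeff]
    rw [Finset.sum_eq_single_of_mem j (Finset.mem_univ j)]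
    · rw [Polynomial.coeff_C_mul, Polynomial.coeff_X_pow, if_pos rfl, mul_one]
    · intro i _ hne
      rw [Polynomial.coeff_C_mul, Polynomial.coeff_X_pow,
        if_neg (fun hcon => hne (Fin.ext hcon.symm)), mul_zero]
  have hvp0 : vp ≠ 0 := by
    obtain ⟨j, hj⟩ := Function.ne_iff.mp hv0
    intro hcon
    apply hj
    have := hvpcoeff j
    rw [hcon, Polynomial.coeff_zero] at this
    rw [← this]
    rfl
  have hvpdeg : vp.degree < (Dn : WithBot ℕ) := by
    rw [hvpdef]
    refine (degree_sum_le _ _).trans_lt ?_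
    rw [Finset.sup_lt_iff (by exact_mod_cast WithBot.bot_lt_coe Dn)]
    intro j _
    refine (degree_mul_le _ _).trans_lt ?_
    refine lt_of_le_of_lt (add_le_add degree_C_le (le_of_eq (degree_X_pow _))) ?_
    rw [zero_add]
    exact_mod_cast j.isLt
  -- Step 8 : Fmκ divides Gκ * vp
  have hsum_mod : ∀ (s : Finset (Fin Dn)) (f : Fin Dn → Polynomial _),
      (∑ i ∈ s, f i) %ₘ Fmκ = ∑ i ∈ s, (f i) %ₘ Fmκ := by
    intro s f
    induction s using Finset.induction with
    | empty => simp [Polynomial.zero_modByMonic]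
    | insert _ _ hni ih =>
      rw [Finset.sum_insert hni, Finset.sum_insert hni, Polynomial.add_modByMonic, ih]
  have hmodzero : (Gκ * vp) %ₘ Fmκ = 0 := by
    have hre : Gκ * vp = ∑ j : Fin Dn, Polynomial.C (v j) * (Gκ * Polynomial.X ^ (j : ℕ)) := by
      rw [hvpdef, Finset.mul_sum]
      exact Finset.sum_congr rfl fun j _ => by ring
    rw [hre, hsum_mod]
    have hterm : ∀ j : Fin Dn,
        (Polynomial.C (v j) * (Gκ * Polynomial.X ^ (j : ℕ))) %ₘ Fmκ
          = Polynomial.C (v j) * ((Gκ * Polynomial.X ^ (j : ℕ)) %ₘ Fmκ) := by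
      intro j
      rw [← Polynomial.smul_eq_C_mul, ← Polynomial.smul_eq_C_mul]
      exact Polynomial.smul_modByMonic _ _
    rw [Finset.sum_congr rfl fun j _ => hterm j]
    apply Polynomial.ext
    intro m
    rw [finset_sum_coeff, Polynomial.coeff_zero]
    by_cases hm : m < Dn
    · have hco : ∀ j : Fin Dn,
          (Polynomial.C (v j) * ((Gκ * Polynomial.X ^ (j : ℕ)) %ₘ Fmκ)).coeff m
            = Mκ ⟨m, hm⟩ j * v j := by
        intro j
        rw [Polynomial.coeff_C_mul, hMκdef, mul_comm]
      rw [Finset.sum_congr rfl fun j _ => hco j]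
      have := congrFun hvker ⟨m, hm⟩
      rw [Matrix.mulVec, dotProduct] at this
      exact this
    · push_neg at hm
      apply Finset.sum_eq_zero
      intro j _
      rw [Polynomial.coeff_C_mul]
      have hz : ((Gκ * Polynomial.X ^ (j : ℕ)) %ₘ Fmκ).coeff m = 0 := by
        apply Polynomial.coeff_eq_zero_of_degree_lt
        refine (degree_modByMonic_lt _ hFmκmon).trans_le ?_
        rw [degree_eq_natDegree hFmκmon.ne_zero, hFmκdeg]
        exact_mod_cast hm
      rw [hz, mul_zero]
  have hdvd : Fmκ ∣ Gκ * vp := (Polynomial.modByMonic_eq_zero_iff_dvd hFmκmon).mp hmodzero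
  -- Step 9 : Fmκ and Gκ are not coprime
  have hnc : ¬ IsCoprime Fmκ Gκ := by
    intro hcop
    have h1 : Fmκ ∣ vp := hcop.dvd_of_dvd_mul_left hdvd
    have h2 := degree_le_of_dvd h1 hvp0
    rw [degree_eq_natDegree hFmκmon.ne_zero, hFmκdeg] at h2
    exact absurd (h2.trans_lt hvpdeg) (lt_irrefl _)
  -- Step 10 : common root in the algebraic closure
  set g := EuclideanDomain.gcd Fmκ Gκ with hgdef
  have hgFm : g ∣ Fmκ := EuclideanDomain.gcd_dvd_left _ _
  have hgG : g ∣ Gκ := EuclideanDomain.gcd_dvd_right _ _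
  have hgnu : ¬ IsUnit g := fun hu => hnc (EuclideanDomain.gcd_isUnit_iff.mp hu)
  have hg0 : g ≠ 0 := by
    intro h0
    rw [h0] at hgFm
    exact hFmκmon.ne_zero (zero_dvd_iff.mp hgFm)
  have hgdeg : g.degree ≠ 0 := fun h => hgnu (Polynomial.isUnit_iff_degree_eq_zero.mpr h)
  obtain ⟨θ, hθ⟩ := IsAlgClosed.exists_root
    (g.map (algebraMap _ (AlgebraicClosure (FractionRing (A2 ⧸ (Ideal.span {p} : Ideal A2))))))
    (by rwa [degree_map])
  set ι := algebraMap (FractionRing (A2 ⧸ (Ideal.span {p} : Ideal A2)))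
    (AlgebraicClosure (FractionRing (A2 ⧸ (Ideal.span {p} : Ideal A2)))) with hιdef
  set Θ : Polynomial A2 →+* AlgebraicClosure (FractionRing (A2 ⧸ (Ideal.span {p} : Ideal A2))) :=
    Polynomial.eval₂RingHom (ι.comp πp) θ with hΘdef
  have hΘeval : ∀ q : Polynomial A2, Θ q = Polynomial.eval θ ((q.map πp).map ι) := by
    intro q
    rw [hΘdef, Polynomial.coe_eval₂RingHom, Polynomial.eval₂_eq_eval_map, Polynomial.map_map]
  have hΘdvd : ∀ q : Polynomial A2, g ∣ q.map πp → Θ q = 0 := by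
    rintro q ⟨e, he⟩
    rw [hΘeval, he, Polynomial.map_mul, Polynomial.eval_mul]
    have : Polynomial.eval θ (g.map ι) = 0 := hθ
    rw [this, zero_mul]
  have hΘFm : Θ Fm = 0 := hΘdvd Fm hgFm
  have hΘG : Θ G = 0 := hΘdvd G hgG
  have hΘJ : ∀ z ∈ J, Θ z = 0 := by
    intro z hz
    obtain ⟨pz, qz, hpq⟩ := Ideal.mem_span_pair.mp hz
    rw [← hpq, map_add, map_mul, map_mul, hΘFm, hΘG, mul_zero, mul_zero, add_zero]
  -- Step 11 : contradictions
  have hΘX : Θ Polynomial.X = θ := Polynomial.eval₂_X _ _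
  have hθ0 : θ = 0 := by
    have h1 := hΘJ _ ha
    rw [map_pow, hΘX] at h1
    rcases Nat.eq_zero_or_pos a with rfl | hapos
    · rw [pow_zero] at h1; exact absurd h1 one_ne_zero
    · exact (pow_eq_zero_iff (by omega)).mp h1
  have hΘC : ∀ z : A2, Θ (Polynomial.C z) = ι (πp z) := fun z => Polynomial.eval₂_C _ _
  have key : ∀ (w u : Polynomial A2) (i : Fin 2) (n : ℕ),
      w = Polynomial.C (X i) + Polynomial.X * u → w ^ n ∈ J → p ∣ X i := by
    intro w u i n hw hmem
    have h1 := hΘJ _ hmem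
    rw [map_pow, hw, map_add, map_mul, hΘX, hθ0, zero_mul, add_zero, hΘC] at h1
    have h2 : ι (πp (X i)) = 0 := by
      rcases Nat.eq_zero_or_pos n with rfl | hnpos
      · rw [pow_zero] at h1; exact absurd h1 one_ne_zero
      · exact (pow_eq_zero_iff (by omega)).mp h1
    have h3 : πp (X i) = 0 := by
      apply RingHom.injective ι
      rw [h2, map_zero]
    rw [hπp, RingHom.comp_apply] at h3
    have h4 : Ideal.Quotient.mk (Ideal.span {p}) (X i : A2) = 0 := by
      apply hπinj
      rw [h3, map_zero]
    exact Ideal.mem_span_singleton.mp (Ideal.Quotient.eq_zero_iff_mem.mp h4)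
  have hpx0 : p ∣ (X 0 : A2) := key w1 u1 0 b hw1 hb
  have hpx1 : p ∣ (X 1 : A2) := key w2 u2 1 c hw2 hc
  have hassoc : Associated p (X 0 : A2) := hp.associated_of_dvd prime_X0 hpx0
  exact X0_not_dvd_X1 (dvd_trans hassoc.symm.dvd hpx1)


set_option maxHeartbeats 1000000 in
lemma pair_case (F' G' : P3) (hF0 : F' ≠ 0)
    (hρF : rho3 F' = 0) (hρG : rho3 G' = 0)
    (N₁ N₂ N₃ : ℕ)
    (h1 : (X 0 : P3) ^ N₁ ∈ Ideal.span {F', G'})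
    (h2 : (X 1 : P3) ^ N₂ ∈ Ideal.span {F', G'})
    (h3 : (X 2 : P3) ^ N₃ ∈ Ideal.span {F', G'}) : False := by
  classical
  obtain ⟨M₁, M₂, μ, hM₁, hM₂, hμ, hmon, hdeg⟩ := monicize F' hF0 hρF
  set Ξ := Xi2 (L := L) M₁ M₂ with hΞ
  set Fm := Polynomial.C (MvPolynomial.C μ) * Ξ F' with hFm
  set G'' := Ξ G' with hG''
  have hunit : IsUnit (Polynomial.C (MvPolynomial.C μ) : Polynomial A2) := by
    rw [Polynomial.isUnit_C]
    exact isUnit_iff_exists_inv.mpr ⟨MvPolynomial.C μ⁻¹,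
      by rw [← MvPolynomial.C_mul, mul_inv_cancel₀ hμ, MvPolynomial.C_1]⟩
  have hspaneq : Ideal.span ({Fm, G''} : Set (Polynomial A2)) =
      Ideal.span ({Ξ F', Ξ G'} : Set (Polynomial A2)) := by
    rw [hFm, hG'']
    exact span_pair_unit_mul hunit
  have htrans : ∀ z ∈ Ideal.span ({F', G'} : Set P3),
      Ξ z ∈ Ideal.span ({Fm, G''} : Set (Polynomial A2)) := by
    intro z hz
    rw [hspaneq]
    obtain ⟨pz, qz, hpq⟩ := Ideal.mem_span_pair.mp hz
    exact Ideal.mem_span_pair.mpr ⟨Ξ pz, Ξ qz, by rw [← map_mul, ← map_mul, ← map_add, hpq]⟩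
  -- images of the variables
  have hX0 : Ξ (X 0 : P3) = Polynomial.X := by
    rw [hΞ]; unfold Xi2; rw [eval₂Hom_X']; rfl
  have hX1 : Ξ (X 1 : P3) = Polynomial.C (X 0) + Polynomial.X ^ M₁ := by
    rw [hΞ]; unfold Xi2; rw [eval₂Hom_X']; rfl
  have hX2 : Ξ (X 2 : P3) = Polynomial.C (X 1) + Polynomial.X ^ M₂ := by
    rw [hΞ]; unfold Xi2; rw [eval₂Hom_X']; rfl
  -- rho compatibility
  have hcomp : ∀ z : P3, rhoA (Ξ z) = rho3 z := by
    have : (rhoA (L := L)).comp Ξ = rho3 (L := L) := by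
      apply MvPolynomial.ringHom_ext
      · intro r
        rw [RingHom.comp_apply]
        rw [show Ξ (MvPolynomial.C r) = Polynomial.C (MvPolynomial.C r) by
          rw [hΞ]; unfold Xi2; rw [eval₂Hom_C]; rfl]
        rw [rho3, eval₂Hom_C, RingHom.id_apply]
        rw [rhoA, RingHom.comp_apply]
        have h1 : (Polynomial.evalRingHom (0 : A2)) (Polynomial.C (MvPolynomial.C r))
            = MvPolynomial.C r := by simp
        rw [h1, epsA, eval₂Hom_C, RingHom.id_apply]
      · intro i
        rw [RingHom.comp_apply]
        have hz : ∀ q : Polynomial A2, rhoA q = epsA (q.eval 0) := fun q => rfl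
        fin_cases i
        · show rhoA (Ξ (X 0)) = rho3 (X 0)
          rw [hX0, hz]
          simp [epsA, rho3]
        · show rhoA (Ξ (X 1)) = rho3 (X 1)
          rw [hX1, hz]
          simp [epsA, rho3, zero_pow (by omega : M₁ ≠ 0)]
        · show rhoA (Ξ (X 2)) = rho3 (X 2)
          rw [hX2, hz]
          simp [epsA, rho3, zero_pow (by omega : M₂ ≠ 0)]
    intro z
    exact RingHom.congr_fun this z
  have hρFm : rhoA Fm = 0 := by
    rw [hFm, map_mul, hcomp, hρF, mul_zero]
  have hρG'' : rhoA G'' = 0 := by rw [hG'', hcomp, hρG]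
  -- memberships
  have hXa : (Polynomial.X : Polynomial A2) ^ N₁ ∈ Ideal.span {Fm, G''} := by
    have := htrans _ h1
    rwa [map_pow, hX0] at this
  have hXb : (Polynomial.C (X 0) + Polynomial.X ^ M₁) ^ N₂ ∈ Ideal.span {Fm, G''} := by
    have := htrans _ h2
    rwa [map_pow, hX1] at this
  have hXc : (Polynomial.C (X 1) + Polynomial.X ^ M₂) ^ N₃ ∈ Ideal.span {Fm, G''} := by
    have := htrans _ h3
    rwa [map_pow, hX2] at this
  have hpow1 : (Polynomial.X : Polynomial A2) ^ M₁ = Polynomial.X * Polynomial.X ^ (M₁ - 1) := by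
    rw [← pow_succ']
    congr 1
    omega
  have hpow2 : (Polynomial.X : Polynomial A2) ^ M₂ = Polynomial.X * Polynomial.X ^ (M₂ - 1) := by
    rw [← pow_succ']
    congr 1
    omega
  exact core Fm G'' (Polynomial.C (X 0) + Polynomial.X ^ M₁)
    (Polynomial.C (X 1) + Polynomial.X ^ M₂)
    (Polynomial.X ^ (M₁ - 1)) (Polynomial.X ^ (M₂ - 1)) hmon hdeg hρFm hρG''
    (by rw [hpow1]) (by rw [hpow2]) hXa hXb hXc


section Reduction

variable (K : Type*) [Field K]

/-- the coefficient field used in the specialization argument -/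
abbrev LK := FractionRing (MvPolynomial (Fin 2) K)

/-- specialization `X₀,X₁,X₂ ↦ x,y,z`, `X₃ ↦ s₁`, `X₄ ↦ s₂`. -/
def chi3 : MvPolynomial (Fin 5) K →+* MvPolynomial (Fin 3) (LK K) :=
  eval₂Hom ((MvPolynomial.C (σ := Fin 3)).comp
      ((algebraMap (MvPolynomial (Fin 2) K) (LK K)).comp (MvPolynomial.C (σ := Fin 2))))
    ![X 0, X 1, X 2,
      MvPolynomial.C (algebraMap (MvPolynomial (Fin 2) K) (LK K) (X 0)),
      MvPolynomial.C (algebraMap (MvPolynomial (Fin 2) K) (LK K) (X 1))]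

set_option maxHeartbeats 2000000 in
set_option synthInstance.maxHeartbeats 400000 in
theorem no_two (F G : MvPolynomial (Fin 5) K)
    (h : (Ideal.span ({F, G} : Set (MvPolynomial (Fin 5) K))).radical = (I5 K).radical) :
    False := by
  classical
  set s₁ : LK K := algebraMap (MvPolynomial (Fin 2) K) (LK K) (X 0) with hs₁def
  set s₂ : LK K := algebraMap (MvPolynomial (Fin 2) K) (LK K) (X 1) with hs₂def
  have hinj := IsFractionRing.injective (MvPolynomial (Fin 2) K) (LK K)
  have hs₁ : s₁ ≠ 0 := by
    rw [hs₁def]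
    intro h0
    exact MvPolynomial.X_ne_zero (0 : Fin 2) ((map_eq_zero_iff _ hinj).mp h0)
  have hs₂ : s₂ ≠ 0 := by
    rw [hs₂def]
    intro h0
    exact MvPolynomial.X_ne_zero (1 : Fin 2) ((map_eq_zero_iff _ hinj).mp h0)
  set χ := chi3 K with hχ
  set F' := χ F with hF'def
  set G' := χ G with hG'def
  -- variable images
  have hc0 : χ (X (0 : Fin 5)) = X (0 : Fin 3) := by rw [hχ]; unfold chi3; rw [eval₂Hom_X']; rfl
  have hc1 : χ (X (1 : Fin 5)) = X (1 : Fin 3) := by rw [hχ]; unfold chi3; rw [eval₂Hom_X']; rfl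
  have hc2 : χ (X (2 : Fin 5)) = X (2 : Fin 3) := by rw [hχ]; unfold chi3; rw [eval₂Hom_X']; rfl
  have hc3 : χ (X (3 : Fin 5)) = MvPolynomial.C s₁ := by
    rw [hχ]; unfold chi3; rw [eval₂Hom_X']; rfl
  have hc4 : χ (X (4 : Fin 5)) = MvPolynomial.C s₂ := by
    rw [hχ]; unfold chi3; rw [eval₂Hom_X']; rfl
  -- radical elements have vanishing image under rho3 ∘ χ
  have hϑ : ∀ H : MvPolynomial (Fin 5) K, H ∈ (I5 K).radical → rho3 (χ H) = 0 := by
    intro H hH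
    obtain ⟨k, hk⟩ := hH
    have hker : I5 K ≤ RingHom.ker ((rho3 (L := LK K)).comp χ) := by
      rw [I5, Ideal.span_le]
      rintro z (rfl | rfl | rfl | rfl | rfl) <;>
        · rw [SetLike.mem_coe, RingHom.mem_ker, RingHom.comp_apply, map_mul]
          first
          | (rw [hc0, hc2]; simp [rho3])
          | (rw [hc0, hc3]; simp [rho3])
          | (rw [hc1, hc3]; simp [rho3])
          | (rw [hc1, hc4]; simp [rho3])
          | (rw [hc2, hc4]; simp [rho3])
    have hk0 : (rho3 (χ H)) ^ k = 0 := by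
      have := hker hk
      rw [RingHom.mem_ker, RingHom.comp_apply] at this
      rw [← map_pow, ← map_pow]
      exact this
    rcases Nat.eq_zero_or_pos k with rfl | hkpos
    · rw [pow_zero] at hk0
      exact absurd hk0 one_ne_zero
    · exact (pow_eq_zero_iff (by omega)).mp hk0
  -- transport of memberships
  have hedgeMem : ∀ ej : MvPolynomial (Fin 5) K, ej ∈ I5 K →
      ∃ N, χ ej ^ N ∈ Ideal.span ({F', G'} : Set (MvPolynomial (Fin 3) (LK K))) := by
    intro ej hej
    have h1 : ej ∈ (Ideal.span ({F, G} : Set (MvPolynomial (Fin 5) K))).radical := by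
      rw [h]; exact Ideal.le_radical hej
    obtain ⟨N, hN⟩ := h1
    obtain ⟨u, v, huv⟩ := Ideal.mem_span_pair.mp hN
    exact ⟨N, Ideal.mem_span_pair.mpr
      ⟨χ u, χ v, by rw [← map_mul, ← map_mul, ← map_add, huv, map_pow]⟩⟩
  have key : ∀ (iv : Fin 3) (s : LK K), s ≠ 0 →
      (∃ N, (X iv * MvPolynomial.C s : MvPolynomial (Fin 3) (LK K)) ^ N ∈
        Ideal.span ({F', G'} : Set (MvPolynomial (Fin 3) (LK K)))) →
      ∃ N, (X iv : MvPolynomial (Fin 3) (LK K)) ^ N ∈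
        Ideal.span ({F', G'} : Set (MvPolynomial (Fin 3) (LK K))) := by
    rintro iv s hs ⟨N, hN⟩
    refine ⟨N, ?_⟩
    have hre : (X iv : MvPolynomial (Fin 3) (LK K)) ^ N
        = MvPolynomial.C ((s ^ N)⁻¹) * ((X iv * MvPolynomial.C s) ^ N) := by
      have h1 : MvPolynomial.C ((s ^ N)⁻¹) * ((X iv * MvPolynomial.C s) ^ N)
          = (MvPolynomial.C ((s ^ N)⁻¹) * MvPolynomial.C (s ^ N)) * (X iv) ^ N := by
        rw [mul_pow, ← MvPolynomial.C_pow]; ring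
      rw [h1, ← MvPolynomial.C_mul, inv_mul_cancel₀ (pow_ne_zero N hs),
        MvPolynomial.C_1, one_mul]
    rw [hre]
    exact Ideal.mul_mem_left _ _ hN
  have hmem2 : e2 K ∈ I5 K := Ideal.subset_span (by simp [e1, e2])
  have hmem3 : e3 K ∈ I5 K := Ideal.subset_span (by simp [e1, e2, e3])
  have hmem5 : e5 K ∈ I5 K := Ideal.subset_span (by simp [e1, e2, e3, e4, e5])
  obtain ⟨N₁, hN₁⟩ : ∃ N, (X (0 : Fin 3) : MvPolynomial (Fin 3) (LK K)) ^ N ∈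
      Ideal.span ({F', G'} : Set (MvPolynomial (Fin 3) (LK K))) := by
    refine key 0 s₁ hs₁ ?_
    obtain ⟨N, hN⟩ := hedgeMem (e2 K) hmem2
    exact ⟨N, by rwa [show χ (e2 K) = X (0 : Fin 3) * MvPolynomial.C s₁ by
      rw [e2, map_mul, hc0, hc3]] at hN⟩
  obtain ⟨N₂, hN₂⟩ : ∃ N, (X (1 : Fin 3) : MvPolynomial (Fin 3) (LK K)) ^ N ∈
      Ideal.span ({F', G'} : Set (MvPolynomial (Fin 3) (LK K))) := by
    refine key 1 s₁ hs₁ ?_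
    obtain ⟨N, hN⟩ := hedgeMem (e3 K) hmem3
    exact ⟨N, by rwa [show χ (e3 K) = X (1 : Fin 3) * MvPolynomial.C s₁ by
      rw [e3, map_mul, hc1, hc3]] at hN⟩
  obtain ⟨N₃, hN₃⟩ : ∃ N, (X (2 : Fin 3) : MvPolynomial (Fin 3) (LK K)) ^ N ∈
      Ideal.span ({F', G'} : Set (MvPolynomial (Fin 3) (LK K))) := by
    refine key 2 s₂ hs₂ ?_
    obtain ⟨N, hN⟩ := hedgeMem (e5 K) hmem5
    exact ⟨N, by rwa [show χ (e5 K) = X (2 : Fin 3) * MvPolynomial.C s₂ by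
      rw [e5, map_mul, hc2, hc4]] at hN⟩
  -- rho-vanishing of F', G'
  have hFrad : F ∈ (I5 K).radical := by
    rw [← h]
    exact Ideal.le_radical (Ideal.subset_span (Set.mem_insert _ _))
  have hGrad : G ∈ (I5 K).radical := by
    rw [← h]
    exact Ideal.le_radical (Ideal.subset_span (Set.mem_insert_of_mem _ rfl))
  have hρF : rho3 F' = 0 := hϑ F hFrad
  have hρG : rho3 G' = 0 := hϑ G hGrad
  -- case analysis
  by_cases hF0 : F' = 0
  · by_cases hG0 : G' = 0
    · rw [hF0, hG0] at hN₁
      obtain ⟨u, v, huv⟩ := Ideal.mem_span_pair.mp hN₁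
      have : (X (0 : Fin 3) : MvPolynomial (Fin 3) (LK K)) ^ N₁ = 0 := by
        rw [← huv]; ring
      exact pow_ne_zero N₁ (MvPolynomial.X_ne_zero (0 : Fin 3)) this
    · have hswap : Ideal.span ({F', G'} : Set (MvPolynomial (Fin 3) (LK K)))
          = Ideal.span ({G', F'} : Set (MvPolynomial (Fin 3) (LK K))) :=
        Ideal.span_pair_comm
      rw [hswap] at hN₁ hN₂ hN₃
      exact pair_case G' F' hG0 hρG hρF N₁ N₂ N₃ hN₁ hN₂ hN₃
  · exact pair_case F' G' hF0 hρF hρG N₁ N₂ N₃ hN₁ hN₂ hN₃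

end Reduction

end AraPentagon

open AraPentagon in
/-- **Example 2 (Barile).** In `R = K[x₁,…,x₅]`, the ideal
`I = (x₁x₃, x₁x₄, x₂x₄, x₂x₅, x₃x₅)` has arithmetical rank `3`: there are `3` elements
of `R` generating an ideal with the same radical as `I`, and no fewer elements do so.
(The variables `x₁,…,x₅` are `X 0, …, X 4`.) -/
theorem ara_pentagon_eq_three (K : Type*) [Field K] :
    (∃ f : Fin 3 → MvPolynomial (Fin 5) K,
      (Ideal.span (Set.range f)).radical =
        (Ideal.span ({X 0 * X 2, X 0 * X 3, X 1 * X 3, X 1 * X 4, X 2 * X 4} :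
          Set (MvPolynomial (Fin 5) K))).radical) ∧
    ∀ (n : ℕ) (f : Fin n → MvPolynomial (Fin 5) K),
      (Ideal.span (Set.range f)).radical =
        (Ideal.span ({X 0 * X 2, X 0 * X 3, X 1 * X 3, X 1 * X 4, X 2 * X 4} :
          Set (MvPolynomial (Fin 5) K))).radical → 3 ≤ n := by
  constructor
  · exact upper K
  · intro n f hrad
    by_contra hlt
    push_neg at hlt
    classical
    set F : MvPolynomial (Fin 5) K := if h : 0 < n then f ⟨0, h⟩ else 0 with hF
    set G : MvPolynomial (Fin 5) K := if h : 1 < n then f ⟨1, h⟩ else 0 with hG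
    have hspan : Ideal.span (Set.range f) = Ideal.span ({F, G} : Set (MvPolynomial (Fin 5) K)) := by
      apply le_antisymm
      · rw [Ideal.span_le]
        rintro x ⟨i, rfl⟩
        have hin : (i : ℕ) < n := i.isLt
        have hi2 : (i : ℕ) = 0 ∨ (i : ℕ) = 1 := by omega
        rcases hi2 with h0 | h1
        · have hFi : F = f i := by
            rw [hF, dif_pos (by omega : 0 < n)]
            congr 1
            exact Fin.ext h0.symm
          rw [← hFi]
          exact Ideal.subset_span (Set.mem_insert _ _)
        · have hGi : G = f i := by
            rw [hG, dif_pos (by omega : 1 < n)]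
            congr 1
            exact Fin.ext h1.symm
          rw [← hGi]
          exact Ideal.subset_span (Set.mem_insert_of_mem _ rfl)
      · rw [Ideal.span_le]
        rintro x (rfl | rfl)
        · rw [hF]
          split_ifs with h0
          · exact Ideal.subset_span ⟨⟨0, h0⟩, rfl⟩
          · exact (Ideal.span (Set.range f)).zero_mem
        · rw [hG]
          split_ifs with h0
          · exact Ideal.subset_span ⟨⟨1, h0⟩, rfl⟩
          · exact (Ideal.span (Set.range f)).zero_mem
    rw [hspan] at hrad
    exact no_two K F G hrad
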